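/- (Term-by-term integration.) Let 0 < α < 1 and 0 < β < 1 with ∑_{s∈S} r_s^{α+β} < 1 (i.e. α+β exceeds the similarity dimension of K). Suppose (f_m) and (g_m) are sequences of α-Hölder, respectively β-Hölder, functions on K that are uniformly bounded in Hölder norm (there is C with sup|f_m| + |f_m|_α ≤ C and sup|g_m| + |g_m|_β ≤ C for all m), and that: (1) f_m → f and g_m → g uniformly on K; (2) (f,g) is integrable; (3) the series ∑_{n=1}^∞ |ψ_n(f_m, g_m)| converges uniformly in m (for every ε > 0 there is n_0 with ∑_{n≥n_0} |ψ_n(f_m,g_m)| < ε for all m). Then each pair (f_m, g_m) is integrable and lim_{m→∞} φ(f_m, g_m) = φ(f, g). -/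
import Mathlib


open Filter Topology

/-- For a word `s = (s_1, …, s_n)` over the alphabet `Fin (N+1)`,
`wmap F s = F s_1 ∘ ⋯ ∘ F s_n`. -/
noncomputable def wmap {N n : ℕ} (F : Fin (N + 1) → ℝ → ℝ) (s : Fin n → Fin (N + 1)) :
    ℝ → ℝ :=
  (List.ofFn s).foldr (fun i h => F i ∘ h) id

/-- `φ_n(f,g) = ∑_{s ∈ S^n} (f(a_s)+f(b_s))·(g(b_s)−g(a_s))`. -/
noncomputable def phiSeq {N : ℕ} (F : Fin (N + 1) → ℝ → ℝ) (a b : ℝ) (f g : ℝ → ℝ)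
    (n : ℕ) : ℝ :=
  ∑ s : Fin n → Fin (N + 1),
    (f (wmap F s a) + f (wmap F s b)) * (g (wmap F s b) - g (wmap F s a))

/-- `psiSeq F a b f g n` is `ψ_{n+1}(f,g)`. -/
noncomputable def psiSeq {N : ℕ} (F : Fin (N + 1) → ℝ → ℝ) (a b : ℝ) (f g : ℝ → ℝ)
    (n : ℕ) : ℝ :=
  ∑ s : Fin n → Fin (N + 1), ∑ l : Fin N,
    (f (wmap F s (F l.castSucc b)) + f (wmap F s (F l.succ a))) *
      (g (wmap F s (F l.succ a)) - g (wmap F s (F l.castSucc b)))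

/-- The self-similar set `K = ⋂_{n ≥ 1} ⋃_{s ∈ S^n} f_s([a,b])`. -/
noncomputable def ssSet {N : ℕ} (F : Fin (N + 1) → ℝ → ℝ) (a b : ℝ) : Set ℝ :=
  ⋂ n : ℕ, ⋃ s : Fin (n + 1) → Fin (N + 1), wmap F s '' Set.Icc a b

lemma wfold_comp {N : ℕ} (F : Fin (N + 1) → ℝ → ℝ) (L : List (Fin (N + 1))) (h : ℝ → ℝ) :
    L.foldr (fun i h => F i ∘ h) h = (L.foldr (fun i h => F i ∘ h) id) ∘ h := by
  induction L with
  | nil => rfl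
  | cons i L ih => simp [List.foldr_cons, ih]; rfl

lemma wmap_snoc {N n : ℕ} (F : Fin (N + 1) → ℝ → ℝ) (s : Fin n → Fin (N + 1))
    (l : Fin (N + 1)) (x : ℝ) : wmap F (Fin.snoc s l) x = wmap F s (F l x) := by
  unfold wmap
  rw [List.ofFn_succ']
  simp only [Fin.snoc_castSucc, Fin.snoc_last, List.concat_eq_append, List.foldr_append]
  rw [wfold_comp]
  simp

lemma wmap_sum {N n : ℕ} (φ : (Fin (n+1) → Fin (N + 1)) → ℝ) :
    ∑ t : Fin (n+1) → Fin (N + 1), φ t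
      = ∑ p : Fin (N+1) × (Fin n → Fin (N+1)), φ (Fin.snoc p.2 p.1) := by
  exact (Fintype.sum_equiv (Fin.snocEquiv (fun _ => Fin (N+1))) _ _ (fun p => rfl)).symm

section ctx
variable {N : ℕ} (r c : Fin (N + 1) → ℝ)
    (hr0 : ∀ s, 0 < r s) (hr1 : ∀ s, r s < 1)
    (a b : ℝ) (hab : a < b)
    (F : Fin (N + 1) → ℝ → ℝ) (hF : ∀ s x, F s x = r s * x + c s)
    (ha : F 0 a = a) (hb : F (Fin.last N) b = b)
    (hord : ∀ l : Fin N, F l.castSucc b ≤ F l.succ a)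

include hF hr0 in
lemma F_mono : ∀ s : Fin (N+1), ∀ x y : ℝ, x ≤ y → F s x ≤ F s y := by
  intro s x y hxy
  rw [hF, hF]
  have := (hr0 s).le
  nlinarith

include hF hr0 ha hab hord in
lemma F_a_le : ∀ l : Fin (N+1), a ≤ F l a := by
  intro l
  induction l using Fin.induction with
  | zero => rw [ha]
  | succ l ihl =>
    calc a ≤ F l.castSucc a := ihl
    _ ≤ F l.castSucc b := F_mono r c hr0 F hF _ _ _ hab.le
    _ ≤ F l.succ a := hord l

include hF hr0 hb hab hord in
lemma F_b_le : ∀ l : Fin (N+1), F l b ≤ b := by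
  intro l
  induction l using Fin.reverseInduction with
  | last => rw [hb]
  | cast l ihl =>
    calc F l.castSucc b ≤ F l.succ a := hord l
    _ ≤ F l.succ b := F_mono r c hr0 F hF _ _ _ hab.le
    _ ≤ b := ihl

include hF hr0 ha hb hab hord in
lemma F_maps : ∀ s : Fin (N+1), ∀ x ∈ Set.Icc a b, F s x ∈ Set.Icc a b := by
  intro s x hx
  constructor
  · exact (F_a_le r c hr0 a b hab F hF ha hord s).trans (F_mono r c hr0 F hF _ _ _ hx.1)
  · exact (F_mono r c hr0 F hF _ _ _ hx.2).trans (F_b_le r c hr0 a b hab F hF hb hord s)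

include hF hr0 ha hb hab hord in
lemma wmap_maps {n : ℕ} (s : Fin n → Fin (N+1)) : ∀ x ∈ Set.Icc a b, wmap F s x ∈ Set.Icc a b := by
  unfold wmap
  generalize List.ofFn s = L
  induction L with
  | nil => intro x hx; simpa using hx
  | cons i L ih =>
    intro x hx
    simp only [List.foldr_cons, Function.comp_apply]
    exact F_maps r c hr0 a b hab F hF ha hb hord i _ (ih x hx)

include hF in
lemma wmap_affine {n : ℕ} (s : Fin n → Fin (N+1)) (x y : ℝ) :
    wmap F s x - wmap F s y = (∏ i, r (s i)) * (x - y) := by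
  unfold wmap
  have h1 : (∏ i, r (s i)) = ((List.ofFn s).map r).prod := by
    rw [List.map_ofFn, List.prod_ofFn]; rfl
  rw [h1]
  generalize List.ofFn s = L
  induction L with
  | nil => simp
  | cons i L ih =>
    simp only [List.foldr_cons, Function.comp_apply, List.map_cons, List.prod_cons, hF]
    rw [mul_assoc, ← ih]
    ring

end ctx


section ctx2
variable {N : ℕ} (r c : Fin (N + 1) → ℝ)
    (hr0 : ∀ s, 0 < r s) (hr1 : ∀ s, r s < 1)
    (a b : ℝ) (hab : a < b)
    (F : Fin (N + 1) → ℝ → ℝ) (hF : ∀ s x, F s x = r s * x + c s)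
    (ha : F 0 a = a) (hb : F (Fin.last N) b = b)
    (hord : ∀ l : Fin N, F l.castSucc b ≤ F l.succ a)

lemma wmap_cons {n : ℕ} (s : Fin n → Fin (N+1)) (i : Fin (N+1)) (x : ℝ) :
    wmap F (Fin.cons i s) x = F i (wmap F s x) := by
  unfold wmap
  rw [List.ofFn_succ]
  simp [Fin.cons_succ]

lemma wmap_fixed (z : ℝ) (i : Fin (N+1)) (hz : F i z = z) (k : ℕ) :
    wmap F (fun _ : Fin k => i) z = z := by
  induction k with
  | zero => rfl
  | succ k ih =>
    have : (fun _ : Fin (k+1) => i) = Fin.cons i (fun _ : Fin k => i) := by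
      ext j; induction j using Fin.cases <;> simp
    rw [this, wmap_cons, ih, hz]

include hab ha in
lemma a_mem_ssSet : a ∈ ssSet F a b := by
  rw [ssSet, Set.mem_iInter]
  intro n
  rw [Set.mem_iUnion]
  refine ⟨fun _ => 0, ⟨a, Set.left_mem_Icc.2 hab.le, wmap_fixed F a 0 ha _⟩⟩

include hab hb in
lemma b_mem_ssSet : b ∈ ssSet F a b := by
  rw [ssSet, Set.mem_iInter]
  intro n
  rw [Set.mem_iUnion]
  exact ⟨fun _ => Fin.last N, ⟨b, Set.right_mem_Icc.2 hab.le, wmap_fixed F b _ hb _⟩⟩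

include hF hr0 ha hb hab hord in
lemma ssSet_subset_Icc : ssSet F a b ⊆ Set.Icc a b := by
  intro x hx
  rw [ssSet, Set.mem_iInter] at hx
  obtain ⟨s, y, hy, hxy⟩ := Set.mem_iUnion.1 (hx 0)
  exact hxy ▸ wmap_maps r c hr0 a b hab F hF ha hb hord s y hy

include hF hr0 ha hb hab hord in
lemma F_mem_ssSet (i : Fin (N+1)) {x : ℝ} (hx : x ∈ ssSet F a b) : F i x ∈ ssSet F a b := by
  rw [ssSet, Set.mem_iInter] at hx ⊢
  intro n
  rw [Set.mem_iUnion]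
  cases n with
  | zero =>
    have hxI : x ∈ Set.Icc a b := ssSet_subset_Icc r c hr0 a b hab F hF ha hb hord
      (by rw [ssSet, Set.mem_iInter]; exact hx)
    refine ⟨fun _ => i, x, hxI, ?_⟩
    show wmap F (Fin.cons i (fun _ : Fin 0 => i)) x = F i x
    rw [wmap_cons]; rfl
  | succ n =>
    obtain ⟨s, y, hy, hxy⟩ := Set.mem_iUnion.1 (hx n)
    exact ⟨Fin.cons i s, y, hy, by rw [wmap_cons, hxy]⟩

include hF hr0 ha hb hab hord in
lemma wmap_mem_ssSet {n : ℕ} (s : Fin n → Fin (N+1)) {x : ℝ} (hx : x ∈ ssSet F a b) :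
    wmap F s x ∈ ssSet F a b := by
  unfold wmap
  generalize List.ofFn s = L
  induction L with
  | nil => exact hx
  | cons i L ih =>
    exact F_mem_ssSet r c hr0 a b hab F hF ha hb hord i ih

end ctx2

lemma chain_identity (f g : ℝ → ℝ) (p : ℕ → ℝ) (k : ℕ) :
    ∑ i ∈ Finset.range k, (f (p i) + f (p (i+1))) * (g (p (i+1)) - g (p i))
      - (f (p 0) + f (p k)) * (g (p k) - g (p 0))
    = ∑ i ∈ Finset.range k,
        ((f (p i) - f (p 0)) * (g (p (i+1)) - g (p i))
          - (g (p i) - g (p 0)) * (f (p (i+1)) - f (p i))) := by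
  induction k with
  | zero => simp
  | succ k ih =>
    rw [Finset.sum_range_succ, Finset.sum_range_succ (fun i =>
      ((f (p i) - f (p 0)) * (g (p (i+1)) - g (p i))
          - (g (p i) - g (p 0)) * (f (p (i+1)) - f (p i))))]
    linear_combination ih

lemma sum_alt (h : ℕ → ℝ) (N : ℕ) :
    ∑ i ∈ Finset.range (2*N+1), h i
      = ∑ l ∈ Finset.range (N+1), h (2*l) + ∑ l ∈ Finset.range N, h (2*l+1) := by
  induction N with
  | zero => simp
  | succ N ih =>
    have e1 : 2*(N+1)+1 = (2*N+1) + 1 + 1 := by ring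
    rw [e1, Finset.sum_range_succ, Finset.sum_range_succ,
      Finset.sum_range_succ (fun l => h (2*l)), Finset.sum_range_succ (fun l => h (2*l+1)), ih]
    have e2 : 2*N+1+1 = 2*(N+1) := by ring
    rw [e2]
    ring

lemma sum_prod_pow {N : ℕ} (x : Fin (N+1) → ℝ) (n : ℕ) :
    ∑ s : Fin n → Fin (N+1), ∏ i, x (s i) = (∑ j, x j)^n := by
  induction n with
  | zero => simp
  | succ n ih =>
    rw [wmap_sum (fun t => ∏ i, x (t i))]
    rw [Fintype.sum_prod_type]
    have : ∀ (l : Fin (N+1)) (s : Fin n → Fin (N+1)),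
        (∏ i, x ((Fin.snoc s l : Fin (n+1) → Fin (N+1)) i)) = (∏ i, x (s i)) * x l := by
      intro l s
      rw [Fin.prod_univ_castSucc]
      simp [Fin.snoc_castSucc, Fin.snoc_last]
    simp only [this]
    rw [pow_succ, ← ih, Finset.sum_comm]
    simp only [← Finset.mul_sum]
    rw [← Finset.sum_mul]

section ctx3
variable {N : ℕ} (r c : Fin (N + 1) → ℝ)
    (hr0 : ∀ s, 0 < r s)
    (a b : ℝ) (hab : a < b)
    (F : Fin (N + 1) → ℝ → ℝ) (hF : ∀ s x, F s x = r s * x + c s)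
    (ha : F 0 a = a) (hb : F (Fin.last N) b = b)
    (hord : ∀ l : Fin N, F l.castSucc b ≤ F l.succ a)
    (α β : ℝ) (hα0 : 0 < α) (hβ0 : 0 < β)
    (C : ℝ) (hC0 : 0 ≤ C)
    (h k : ℝ → ℝ)
    (hh : ∀ x ∈ ssSet F a b, ∀ y ∈ ssSet F a b, |h x - h y| ≤ C * |x - y| ^ α)
    (hk : ∀ x ∈ ssSet F a b, ∀ y ∈ ssSet F a b, |k x - k y| ≤ C * |x - y| ^ β)

include hr0 hab hF ha hb hord hα0 hβ0 hC0 hh hk in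
lemma word_estimate {n : ℕ} (s : Fin n → Fin (N+1)) :
    |(∑ l : Fin (N+1),
        (h (wmap F s (F l a)) + h (wmap F s (F l b))) *
          (k (wmap F s (F l b)) - k (wmap F s (F l a))))
      + (∑ l : Fin N,
        (h (wmap F s (F l.castSucc b)) + h (wmap F s (F l.succ a))) *
          (k (wmap F s (F l.succ a)) - k (wmap F s (F l.castSucc b))))
      - (h (wmap F s a) + h (wmap F s b)) * (k (wmap F s b) - k (wmap F s a))|
    ≤ (2*N+1 : ℝ) * (2*C^2) * ((∏ i, r (s i)) * (b-a))^(α+β) := by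
  set R : ℝ := ∏ i, r (s i) with hR
  have hRpos : 0 < R := Finset.prod_pos (fun i _ => hr0 (s i))
  set ℓ : ℝ := R * (b - a) with hℓ
  have hℓpos : 0 < ℓ := mul_pos hRpos (sub_pos.2 hab)
  -- the chain of points
  set q : ℕ → ℝ := fun i =>
    if i % 2 = 0 then F ⟨min (i/2) N, by omega⟩ a else F ⟨min (i/2) N, by omega⟩ b with hq
  set p : ℕ → ℝ := fun i => wmap F s (q i) with hp
  have hqe : ∀ i : ℕ, i % 2 = 0 → q i = F ⟨min (i/2) N, by omega⟩ a := by
    intro i hi; rw [hq]; exact if_pos hi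
  have hqo : ∀ i : ℕ, i % 2 ≠ 0 → q i = F ⟨min (i/2) N, by omega⟩ b := by
    intro i hi; rw [hq]; exact if_neg hi
  have hqI : ∀ i, q i ∈ Set.Icc a b := by
    intro i
    by_cases hi : i % 2 = 0
    · rw [hqe i hi]
      exact F_maps r c hr0 a b hab F hF ha hb hord _ a (Set.left_mem_Icc.2 hab.le)
    · rw [hqo i hi]
      exact F_maps r c hr0 a b hab F hF ha hb hord _ b (Set.right_mem_Icc.2 hab.le)
  have hqK : ∀ i, q i ∈ ssSet F a b := by
    intro i
    by_cases hi : i % 2 = 0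
    · rw [hqe i hi]
      exact F_mem_ssSet r c hr0 a b hab F hF ha hb hord _ (a_mem_ssSet a b hab F ha)
    · rw [hqo i hi]
      exact F_mem_ssSet r c hr0 a b hab F hF ha hb hord _ (b_mem_ssSet a b hab F hb)
  have hpK : ∀ i, p i ∈ ssSet F a b := fun i =>
    wmap_mem_ssSet r c hr0 a b hab F hF ha hb hord s (hqK i)
  have hpd : ∀ i j, |p i - p j| ≤ ℓ := by
    intro i j
    rw [hp]
    dsimp only
    rw [wmap_affine r c F hF, abs_mul, abs_of_pos hRpos, hℓ]
    have h1 := (hqI i).1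
    have h2 := (hqI i).2
    have h3 := (hqI j).1
    have h4 := (hqI j).2
    have : |q i - q j| ≤ b - a := by rw [abs_le]; constructor <;> linarith
    nlinarith
  have hhb : ∀ i j, |h (p i) - h (p j)| ≤ C * ℓ ^ α := by
    intro i j
    refine (hh _ (hpK i) _ (hpK j)).trans ?_
    exact mul_le_mul_of_nonneg_left
      (Real.rpow_le_rpow (abs_nonneg _) (hpd i j) hα0.le) hC0
  have hkb : ∀ i j, |k (p i) - k (p j)| ≤ C * ℓ ^ β := by
    intro i j
    refine (hk _ (hpK i) _ (hpK j)).trans ?_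
    exact mul_le_mul_of_nonneg_left
      (Real.rpow_le_rpow (abs_nonneg _) (hpd i j) hβ0.le) hC0
  -- identify chain points
  have hqea : ∀ l : Fin (N+1), q (2*(l:ℕ)) = F l a := by
    intro l
    have hl := l.isLt
    rw [hqe _ (by omega)]
    congr 1
    apply Fin.ext
    show min (2*(l:ℕ)/2) N = (l:ℕ)
    omega
  have hqeb : ∀ l : Fin (N+1), q (2*(l:ℕ)+1) = F l b := by
    intro l
    have hl := l.isLt
    rw [hqo _ (by omega)]
    congr 1
    apply Fin.ext
    show min ((2*(l:ℕ)+1)/2) N = (l:ℕ)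
    omega
  have hq0 : q 0 = a := by
    rw [hqe 0 rfl]
    have : (⟨min (0/2) N, by omega⟩ : Fin (N+1)) = 0 := by
      apply Fin.ext
      show min 0 N = 0
      omega
    rw [this, ha]
  have hqlast : q (2*N+1) = b := by
    rw [hqo _ (by omega)]
    have : (⟨min ((2*N+1)/2) N, by omega⟩ : Fin (N+1)) = Fin.last N := by
      apply Fin.ext
      show min ((2*N+1)/2) N = N
      omega
    rw [this, hb]
  set T : ℕ → ℝ := fun i => (h (p i) + h (p (i+1))) * (k (p (i+1)) - k (p i)) with hT
  have claim1 : (∑ l : Fin (N+1),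
        (h (wmap F s (F l a)) + h (wmap F s (F l b))) *
          (k (wmap F s (F l b)) - k (wmap F s (F l a))))
      = ∑ l ∈ Finset.range (N+1), T (2*l) := by
    rw [← Fin.sum_univ_eq_sum_range (fun l => T (2*l)) (N+1)]
    refine Finset.sum_congr rfl (fun l _ => ?_)
    rw [hT]
    dsimp only
    rw [hp]
    dsimp only
    rw [hqea l, hqeb l]
  have claim2 : (∑ l : Fin N,
        (h (wmap F s (F l.castSucc b)) + h (wmap F s (F l.succ a))) *
          (k (wmap F s (F l.succ a)) - k (wmap F s (F l.castSucc b))))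
      = ∑ l ∈ Finset.range N, T (2*l+1) := by
    rw [← Fin.sum_univ_eq_sum_range (fun l => T (2*l+1)) N]
    refine Finset.sum_congr rfl (fun l _ => ?_)
    rw [hT]
    dsimp only
    rw [hp]
    dsimp only
    have e1 : q (2*(l:ℕ)+1) = F l.castSucc b := by
      have := hqeb l.castSucc
      rwa [Fin.coe_castSucc] at this
    have e2 : q (2*(l:ℕ)+1+1) = F l.succ a := by
      have := hqea l.succ
      rw [Fin.val_succ] at this
      rwa [show 2*((l:ℕ)+1) = 2*(l:ℕ)+1+1 by ring] at this
    rw [e1, e2]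
  have claim3 : (h (wmap F s a) + h (wmap F s b)) * (k (wmap F s b) - k (wmap F s a))
      = (h (p 0) + h (p (2*N+1))) * (k (p (2*N+1)) - k (p 0)) := by
    rw [hp]
    dsimp only
    rw [hq0, hqlast]
  rw [claim1, claim2, claim3, ← sum_alt T N]
  have key := chain_identity h k p (2*N+1)
  rw [hT]
  simp only [hT]
  rw [key]
  refine (Finset.abs_sum_le_sum_abs _ _).trans ?_
  have hbound : ∀ i ∈ Finset.range (2*N+1),
      |(h (p i) - h (p 0)) * (k (p (i+1)) - k (p i))
        - (k (p i) - k (p 0)) * (h (p (i+1)) - h (p i))| ≤ 2*C^2 * ℓ^(α+β) := by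
    intro i _
    have e1 : |(h (p i) - h (p 0)) * (k (p (i+1)) - k (p i))| ≤ (C * ℓ^α) * (C * ℓ^β) := by
      rw [abs_mul]
      exact mul_le_mul (hhb _ _) (hkb _ _) (abs_nonneg _) (by positivity)
    have e2 : |(k (p i) - k (p 0)) * (h (p (i+1)) - h (p i))| ≤ (C * ℓ^α) * (C * ℓ^β) := by
      rw [abs_mul, mul_comm (C * ℓ^α)]
      exact mul_le_mul (hkb _ _) (hhb _ _) (abs_nonneg _) (by positivity)
    have e3 := abs_sub ((h (p i) - h (p 0)) * (k (p (i+1)) - k (p i)))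
      ((k (p i) - k (p 0)) * (h (p (i+1)) - h (p i)))
    have e4 : ℓ ^ (α+β) = ℓ^α * ℓ^β := Real.rpow_add hℓpos α β
    rw [e4]
    nlinarith [e3, e1, e2]
  refine (Finset.sum_le_sum hbound).trans ?_
  rw [Finset.sum_const, Finset.card_range, nsmul_eq_mul]
  have e5 : ((2*N+1 : ℕ) : ℝ) = 2*(N:ℝ)+1 := by push_cast; ring
  rw [e5]
  exact le_of_eq (by ring)
end ctx3



section ctx4
variable {N : ℕ} (r c : Fin (N + 1) → ℝ)
    (hr0 : ∀ s, 0 < r s)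
    (a b : ℝ) (hab : a < b)
    (F : Fin (N + 1) → ℝ → ℝ) (hF : ∀ s x, F s x = r s * x + c s)
    (ha : F 0 a = a) (hb : F (Fin.last N) b = b)
    (hord : ∀ l : Fin N, F l.castSucc b ≤ F l.succ a)
    (α β : ℝ) (hα0 : 0 < α) (hβ0 : 0 < β)
    (C : ℝ) (hC0 : 0 ≤ C)
    (h k : ℝ → ℝ)
    (hh : ∀ x ∈ ssSet F a b, ∀ y ∈ ssSet F a b, |h x - h y| ≤ C * |x - y| ^ α)
    (hk : ∀ x ∈ ssSet F a b, ∀ y ∈ ssSet F a b, |k x - k y| ≤ C * |x - y| ^ β)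

include hr0 hab hF ha hb hord hα0 hβ0 hC0 hh hk in
lemma step_estimate (n : ℕ) :
    |phiSeq F a b h k (n+1) + psiSeq F a b h k n - phiSeq F a b h k n|
      ≤ (2*N+1 : ℝ) * (2*C^2) * (b-a)^(α+β) * (∑ j, r j ^ (α+β))^n := by
  have hphi : phiSeq F a b h k (n+1) = ∑ s : Fin n → Fin (N+1), ∑ l : Fin (N+1),
      (h (wmap F s (F l a)) + h (wmap F s (F l b))) *
        (k (wmap F s (F l b)) - k (wmap F s (F l a))) := by
    rw [phiSeq, wmap_sum (fun t => (h (wmap F t a) + h (wmap F t b)) *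
      (k (wmap F t b) - k (wmap F t a))), Fintype.sum_prod_type, Finset.sum_comm]
    refine Finset.sum_congr rfl fun s _ => Finset.sum_congr rfl fun l _ => ?_
    rw [wmap_snoc, wmap_snoc]
  rw [hphi, psiSeq, phiSeq, ← Finset.sum_add_distrib, ← Finset.sum_sub_distrib]
  refine (Finset.abs_sum_le_sum_abs _ _).trans ?_
  refine (Finset.sum_le_sum (fun s _ =>
    word_estimate r c hr0 a b hab F hF ha hb hord α β hα0 hβ0 C hC0 h k hh hk s)).trans ?_
  have e : ∀ s : Fin n → Fin (N+1), ((∏ i, r (s i)) * (b-a))^(α+β)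
      = (∏ i, r (s i) ^ (α+β)) * (b-a)^(α+β) := by
    intro s
    rw [Real.mul_rpow (Finset.prod_nonneg (fun i _ => (hr0 (s i)).le)) (by linarith),
      Real.finset_prod_rpow _ _ (fun i _ => (hr0 (s i)).le)]
  simp only [e]
  rw [← Finset.mul_sum, ← Finset.sum_mul,
    show (∑ s : Fin n → Fin (N+1), ∏ i, r (s i)^(α+β)) = (∑ j, r j ^(α+β))^n from sum_prod_pow (fun j => r j ^ (α+β)) n]
  exact le_of_eq (by ring)
end ctx4

lemma term_diff (C δ A B A' B' P Q P' Q' : ℝ) (hC : 0 ≤ C) (hδ : 0 ≤ δ)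
    (h1 : |A| ≤ C) (h2 : |B| ≤ C) (h3 : |P'| ≤ C) (h4 : |Q'| ≤ C)
    (h5 : |A-A'| ≤ δ) (h6 : |B-B'| ≤ δ) (h7 : |P-P'| ≤ δ) (h8 : |Q-Q'| ≤ δ) :
    |(A+B)*(P-Q) - (A'+B')*(P'-Q')| ≤ 8*C*δ := by
  have e : (A+B)*(P-Q) - (A'+B')*(P'-Q')
      = (A+B)*((P-P')-(Q-Q')) + ((A-A')+(B-B'))*(P'-Q') := by ring
  rw [e]
  refine (abs_add_le ((A+B)*((P-P')-(Q-Q'))) (((A-A')+(B-B'))*(P'-Q'))).trans ?_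
  rw [abs_mul, abs_mul]
  have b1 : |A+B| * |(P-P')-(Q-Q')| ≤ (C+C)*(δ+δ) :=
    mul_le_mul ((abs_add_le _ _).trans (add_le_add h1 h2))
      ((abs_sub _ _).trans (add_le_add h7 h8)) (abs_nonneg _) (by linarith)
  have b2 : |(A-A')+(B-B')| * |P'-Q'| ≤ (δ+δ)*(C+C) :=
    mul_le_mul ((abs_add_le _ _).trans (add_le_add h5 h6))
      ((abs_sub _ _).trans (add_le_add h3 h4)) (abs_nonneg _) (by linarith)
  linarith

lemma geom_tail (ρ : ℝ) (hρ0 : 0 ≤ ρ) (hρ1 : ρ < 1) (n n' : ℕ) :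
    ∑ j ∈ Finset.Ico n n', ρ^j ≤ ρ^n * (1-ρ)⁻¹ := by
  rcases le_or_gt n n' with hnn | hnn
  · have t : (∑ j ∈ Finset.Ico n n', ρ^j) * (1-ρ) = ρ^n - ρ^n' := by
      rw [Finset.sum_mul]
      have e : ∀ j, ρ^j * (1-ρ) = ρ^j - ρ^(j+1) := fun j => by ring
      simp only [e]
      rw [Finset.sum_Ico_eq_sub _ hnn, Finset.sum_range_sub' (fun j => ρ^j),
        Finset.sum_range_sub' (fun j => ρ^j)]
      ring
    have h1ρ : 0 < 1 - ρ := by linarith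
    rw [← div_eq_mul_inv, le_div_iff₀ h1ρ, t]
    have : (0:ℝ) ≤ ρ^n' := pow_nonneg hρ0 _
    linarith
  · rw [Finset.Ico_eq_empty (by omega)]
    simp only [Finset.sum_empty]
    have h1ρ : 0 < 1 - ρ := by linarith
    have : (0:ℝ) ≤ ρ^n := pow_nonneg hρ0 _
    have : (0:ℝ) ≤ (1-ρ)⁻¹ := le_of_lt (inv_pos.2 h1ρ)
    positivity
/-- Term-by-term integration: under uniform Hölder bounds, uniform convergence
`f_m → f`, `g_m → g` on `K`, integrability of `(f,g)`, and uniform (in `m`)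
convergence of `∑_n |ψ_n(f_m,g_m)|`, each `(f_m,g_m)` is integrable and
`φ(f_m,g_m) → φ(f,g)`. -/
theorem term_by_term_integration
    {N : ℕ} (r c : Fin (N + 1) → ℝ)
    (hr0 : ∀ s, 0 < r s) (hr1 : ∀ s, r s < 1)
    (a b : ℝ) (hab : a < b)
    (F : Fin (N + 1) → ℝ → ℝ) (hF : ∀ s x, F s x = r s * x + c s)
    (ha : F 0 a = a) (hb : F (Fin.last N) b = b)
    (hord : ∀ l : Fin N, F l.castSucc b ≤ F l.succ a)
    (α β : ℝ) (hα0 : 0 < α) (hα1 : α < 1) (hβ0 : 0 < β) (hβ1 : β < 1)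
    (hdim : ∑ s : Fin (N + 1), r s ^ (α + β) < 1)
    (fm gm : ℕ → ℝ → ℝ) (f g : ℝ → ℝ) (C : ℝ)
    (hfC : ∀ m : ℕ, (∀ x ∈ ssSet F a b, |fm m x| ≤ C) ∧
      ∀ x ∈ ssSet F a b, ∀ y ∈ ssSet F a b, |fm m x - fm m y| ≤ C * |x - y| ^ α)
    (hgC : ∀ m : ℕ, (∀ x ∈ ssSet F a b, |gm m x| ≤ C) ∧
      ∀ x ∈ ssSet F a b, ∀ y ∈ ssSet F a b, |gm m x - gm m y| ≤ C * |x - y| ^ β)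
    (hfu : ∀ ε : ℝ, 0 < ε → ∃ M : ℕ, ∀ m : ℕ, M ≤ m →
      ∀ x ∈ ssSet F a b, |fm m x - f x| < ε)
    (hgu : ∀ ε : ℝ, 0 < ε → ∃ M : ℕ, ∀ m : ℕ, M ≤ m →
      ∀ x ∈ ssSet F a b, |gm m x - g x| < ε)
    (L : ℝ) (hfg : Tendsto (phiSeq F a b f g) atTop (nhds L))
    (hpsi : ∀ ε : ℝ, 0 < ε → ∃ n₀ : ℕ, ∀ m : ℕ, ∀ n₂ : ℕ,
      ∑ j ∈ Finset.Ico n₀ n₂, |psiSeq F a b (fm m) (gm m) j| < ε) :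
    ∃ Φ : ℕ → ℝ,
      (∀ m : ℕ, Tendsto (phiSeq F a b (fm m) (gm m)) atTop (nhds (Φ m))) ∧
      Tendsto Φ atTop (nhds L) := by
  have hC0 : 0 ≤ C := (abs_nonneg _).trans ((hfC 0).1 a (a_mem_ssSet a b hab F ha))
  have hρ0 : (0:ℝ) ≤ ∑ j, r j ^ (α+β) :=
    Finset.sum_nonneg fun j _ => (Real.rpow_pos_of_pos (hr0 j) _).le
  have hρ1 : (∑ j, r j ^ (α+β)) < 1 := hdim
  have hD0 : (0:ℝ) ≤ (2*(N:ℝ)+1) * (2*C^2) * (b-a)^(α+β) := by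
    have : (0:ℝ) < b - a := sub_pos.2 hab
    positivity
  set ρ : ℝ := ∑ j, r j ^ (α+β) with hρdef
  set D : ℝ := (2*(N:ℝ)+1) * (2*C^2) * (b-a)^(α+β) with hDdef
  set u : ℕ → ℕ → ℝ := fun m => phiSeq F a b (fm m) (gm m) with hu
  -- one-step estimate
  have hstep : ∀ m n, |u m (n+1) - u m n|
      ≤ |psiSeq F a b (fm m) (gm m) n| + D * ρ^n := by
    intro m n
    have hst := step_estimate r c hr0 a b hab F hF ha hb hord α β hα0 hβ0 C hC0
      (fm m) (gm m) (hfC m).2 (hgC m).2 n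
    have e : u m (n+1) - u m n
        = (phiSeq F a b (fm m) (gm m) (n+1) + psiSeq F a b (fm m) (gm m) n
            - phiSeq F a b (fm m) (gm m) n) + (-(psiSeq F a b (fm m) (gm m) n)) := by
      rw [hu]; ring
    rw [e]
    refine (abs_add_le _ _).trans ?_
    rw [abs_neg, hDdef, hρdef]
    have : (2*(N:ℝ)+1) * (2*C^2) * (b-a)^(α+β) * (∑ j, r j ^ (α+β))^n
        = (2*(N:ℝ)+1) * (2*C^2) * ((b-a)^(α+β) * (∑ j, r j ^ (α+β))^n) := by ring
    linarith [hst]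
  -- telescoping estimate
  have htel : ∀ m n n', n ≤ n' → |u m n' - u m n|
      ≤ (∑ j ∈ Finset.Ico n n', |psiSeq F a b (fm m) (gm m) j|) + D * (ρ^n * (1-ρ)⁻¹) := by
    intro m n n' hnn
    have e : u m n' - u m n = ∑ j ∈ Finset.Ico n n', (u m (j+1) - u m j) := by
      rw [Finset.sum_Ico_eq_sub _ hnn, Finset.sum_range_sub (u m), Finset.sum_range_sub (u m)]
      ring
    rw [e]
    refine (Finset.abs_sum_le_sum_abs _ _).trans ?_
    refine (Finset.sum_le_sum (fun j _ => hstep m j)).trans ?_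
    rw [Finset.sum_add_distrib, ← Finset.mul_sum]
    have hg := geom_tail ρ hρ0 hρ1 n n'
    have := mul_le_mul_of_nonneg_left hg hD0
    linarith
  -- uniform smallness of tails
  have htail : ∀ ε : ℝ, 0 < ε → ∃ n₃ : ℕ, ∀ m n n', n₃ ≤ n → n ≤ n' →
      |u m n' - u m n| < ε := by
    intro ε hε
    obtain ⟨n₀, hn₀⟩ := hpsi (ε/2) (by linarith)
    have htend : Tendsto (fun n => D * (ρ^n * (1-ρ)⁻¹)) atTop (nhds 0) := by
      have h1 := tendsto_pow_atTop_nhds_zero_of_lt_one hρ0 hρ1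
      have h2 := (h1.mul_const (1-ρ)⁻¹).const_mul D
      simpa using h2
    have hev : ∀ᶠ n in atTop, D * (ρ^n * (1-ρ)⁻¹) < ε/2 :=
      htend.eventually_lt_const (by linarith)
    obtain ⟨n₁, hn₁⟩ := eventually_atTop.1 hev
    refine ⟨max n₀ n₁, fun m n n' hn hnn => ?_⟩
    have h3 := htel m n n' hnn
    have h4 : (∑ j ∈ Finset.Ico n n', |psiSeq F a b (fm m) (gm m) j|)
        ≤ ∑ j ∈ Finset.Ico n₀ n', |psiSeq F a b (fm m) (gm m) j| := by
      refine Finset.sum_le_sum_of_subset_of_nonneg ?_ (fun j _ _ => abs_nonneg _)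
      exact Finset.Ico_subset_Ico (le_trans (le_max_left _ _) hn) le_rfl
    have h5 := hn₀ m n'
    have h6 := hn₁ n (le_trans (le_max_right _ _) hn)
    linarith
  -- each sequence converges
  have hconv : ∀ m, ∃ x, Tendsto (u m) atTop (nhds x) := by
    intro m
    refine cauchySeq_tendsto_of_complete ?_
    rw [Metric.cauchySeq_iff']
    intro ε hε
    obtain ⟨n₃, hn₃⟩ := htail ε hε
    exact ⟨n₃, fun n hn => by rw [Real.dist_eq]; exact hn₃ m n₃ n le_rfl hn⟩
  choose Φ hΦ using hconv
  refine ⟨Φ, hΦ, ?_⟩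
  -- |g| ≤ C on K
  have hgK : ∀ x ∈ ssSet F a b, |g x| ≤ C := by
    intro x hx
    refine le_of_forall_pos_le_add (fun ε hε => ?_)
    obtain ⟨M, hM⟩ := hgu ε hε
    have h1 := (hgC M).1 x hx
    have h2 := (hM M le_rfl x hx).le
    calc |g x| = |gm M x - (gm M x - g x)| := by ring_nf
      _ ≤ |gm M x| + |gm M x - g x| := abs_sub _ _
      _ ≤ C + ε := add_le_add h1 h2
  -- final limit
  rw [Metric.tendsto_atTop]
  intro ε hε
  obtain ⟨n₃, hn₃⟩ := htail (ε/4) (by linarith)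
  obtain ⟨n₄, hn₄⟩ := Metric.tendsto_atTop.1 hfg (ε/4) (by linarith)
  set n : ℕ := max n₃ n₄ with hn
  set X : ℝ := ((N:ℝ)+1)^n with hX
  have hXpos : 0 < X := by rw [hX]; positivity
  set δ : ℝ := ε/(4*(X*8*(C+1))) with hδdef
  have hδ : 0 < δ := by rw [hδdef]; positivity
  obtain ⟨M1, hM1⟩ := hfu δ hδ
  obtain ⟨M2, hM2⟩ := hgu δ hδ
  refine ⟨max M1 M2, fun m hm => ?_⟩
  -- t1 : tail of sequence m
  have t1 : |Φ m - u m n| ≤ ε/4 := by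
    have hten : Tendsto (fun n' => |u m n' - u m n|) atTop (nhds (|Φ m - u m n|)) :=
      ((hΦ m).sub_const (u m n)).abs
    refine le_of_tendsto hten (eventually_atTop.2 ⟨n, fun n' hn' =>
      (hn₃ m n n' (le_max_left _ _) hn').le⟩)
  -- t2 : compare u m n with phiSeq f g n
  have t2 : |u m n - phiSeq F a b f g n| < ε/4 := by
    have hdiff : u m n - phiSeq F a b f g n
        = ∑ s : Fin n → Fin (N+1),
          ((fm m (wmap F s a) + fm m (wmap F s b)) * (gm m (wmap F s b) - gm m (wmap F s a))
            - (f (wmap F s a) + f (wmap F s b)) * (g (wmap F s b) - g (wmap F s a))) := by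
      rw [hu]
      dsimp only
      rw [phiSeq, phiSeq, ← Finset.sum_sub_distrib]
    rw [hdiff]
    have hsum : |∑ s : Fin n → Fin (N+1),
          ((fm m (wmap F s a) + fm m (wmap F s b)) * (gm m (wmap F s b) - gm m (wmap F s a))
            - (f (wmap F s a) + f (wmap F s b)) * (g (wmap F s b) - g (wmap F s a)))|
        ≤ X * (8*C*δ) := by
      refine (Finset.abs_sum_le_sum_abs _ _).trans ?_
      have hterm : ∀ s : Fin n → Fin (N+1),
          |(fm m (wmap F s a) + fm m (wmap F s b)) * (gm m (wmap F s b) - gm m (wmap F s a))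
            - (f (wmap F s a) + f (wmap F s b)) * (g (wmap F s b) - g (wmap F s a))|
          ≤ 8*C*δ := by
        intro s
        have hwa : wmap F s a ∈ ssSet F a b :=
          wmap_mem_ssSet r c hr0 a b hab F hF ha hb hord s (a_mem_ssSet a b hab F ha)
        have hwb : wmap F s b ∈ ssSet F a b :=
          wmap_mem_ssSet r c hr0 a b hab F hF ha hb hord s (b_mem_ssSet a b hab F hb)
        refine term_diff C δ _ _ _ _ _ _ _ _ hC0 hδ.le
          ((hfC m).1 _ hwa) ((hfC m).1 _ hwb) (hgK _ hwb) (hgK _ hwa)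
          (hM1 m (le_trans (le_max_left _ _) hm) _ hwa).le
          (hM1 m (le_trans (le_max_left _ _) hm) _ hwb).le
          (hM2 m (le_trans (le_max_right _ _) hm) _ hwb).le
          (hM2 m (le_trans (le_max_right _ _) hm) _ hwa).le
      refine (Finset.sum_le_sum (fun s _ => hterm s)).trans (le_of_eq ?_)
      rw [Finset.sum_const, Finset.card_univ, nsmul_eq_mul]
      have hcard : (Fintype.card (Fin n → Fin (N+1)) : ℝ) = ((N:ℝ)+1)^n := by
        rw [Fintype.card_fun]
        push_cast
        simp
      rw [hcard, hX]
    refine hsum.trans_lt ?_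
    · -- X * (8*C*δ) < ε/4
      rw [hδdef]
      rw [div_eq_mul_inv]
      have hden : (0:ℝ) < 4*(X*8*(C+1)) := by positivity
      rw [show X * (8*C*(ε * (4*(X*8*(C+1)))⁻¹)) = (X*8*C*ε) / (4*(X*8*(C+1))) by
        rw [div_eq_mul_inv]; ring]
      rw [div_lt_iff₀ hden]
      have : ε/4 * (4*(X*8*(C+1))) = X*8*(C+1)*ε := by ring
      rw [this]
      nlinarith [hXpos, hε, hC0]
  have t3 : |phiSeq F a b f g n - L| < ε/4 := by
    have := hn₄ n (le_max_right _ _)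
    rwa [Real.dist_eq] at this
  rw [Real.dist_eq]
  have tri : |Φ m - L| ≤ |Φ m - u m n| + |u m n - phiSeq F a b f g n|
      + |phiSeq F a b f g n - L| := by
    calc |Φ m - L| ≤ |Φ m - phiSeq F a b f g n| + |phiSeq F a b f g n - L| :=
          abs_sub_le _ _ _
      _ ≤ (|Φ m - u m n| + |u m n - phiSeq F a b f g n|) + |phiSeq F a b f g n - L| := by
          have := abs_sub_le (Φ m) (u m n) (phiSeq F a b f g n)
          linarith
  linarith
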